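/- Along a solution of the Ginzburg-Landau system, the quantity H(x) = (1/κ²)f'(x)² + (q'(x))² − f(x)²q(x)² − (1/2)f(x)⁴ + f(x)² is constant (first integral). -/

import Mathlib

theorem stmt_14 (b c κ : ℝ) (hκ : 0 < κ)
    (f q : ℝ → ℝ) (hf2 : ContDiff ℝ 2 f) (hq2 : ContDiff ℝ 2 q)
    (hfeq : ∀ x ∈ Set.Ioo b c,
      (1 / κ ^ 2) * deriv (deriv f) x = f x * ((f x) ^ 2 + (q x) ^ 2 - 1))
    (hqeq : ∀ x ∈ Set.Ioo b c, deriv (deriv q) x = q x * (f x) ^ 2)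
    (H : ℝ → ℝ)
    (hH : H = fun x => (1 / κ ^ 2) * (deriv f x) ^ 2 + (deriv q x) ^ 2 -
      (f x) ^ 2 * (q x) ^ 2 - (1 / 2) * (f x) ^ 4 + (f x) ^ 2) :
    ∀ x ∈ Set.Ioo b c, ∀ y ∈ Set.Ioo b c, H x = H y := by
  have hf1 : Differentiable ℝ f := hf2.differentiable two_ne_zero
  have hq1 : Differentiable ℝ q := hq2.differentiable two_ne_zero
  have hf2' : ContDiff ℝ (1 + 1 : ℕ) f := by norm_num; exact hf2
  have hq2' : ContDiff ℝ (1 + 1 : ℕ) q := by norm_num; exact hq2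
  have hdf : Differentiable ℝ (deriv f) :=
    ((contDiff_succ_iff_deriv (n := 1)).mp hf2').2.2.differentiable one_ne_zero
  have hdq : Differentiable ℝ (deriv q) :=
    ((contDiff_succ_iff_deriv (n := 1)).mp hq2').2.2.differentiable one_ne_zero
  have key : ∀ x ∈ Set.Ioo b c, HasDerivAt H 0 x := by
    intro x hx
    have h1 : HasDerivAt f (deriv f x) x := (hf1 x).hasDerivAt
    have h2 : HasDerivAt q (deriv q x) x := (hq1 x).hasDerivAt
    have h3 : HasDerivAt (deriv f) (deriv (deriv f) x) x := (hdf x).hasDerivAt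
    have h4 : HasDerivAt (deriv q) (deriv (deriv q) x) x := (hdq x).hasDerivAt
    have hD : HasDerivAt H
        ((1 / κ ^ 2) * (2 * deriv f x ^ 1 * deriv (deriv f) x) +
          2 * deriv q x ^ 1 * deriv (deriv q) x -
          ((2 * f x ^ 1 * deriv f x) * q x ^ 2 + f x ^ 2 * (2 * q x ^ 1 * deriv q x)) -
          (1 / 2) * (4 * f x ^ 3 * deriv f x) + 2 * f x ^ 1 * deriv f x) x := by
      rw [hH]
      exact ((((((h3.pow 2).const_mul (1 / κ ^ 2)).add (h4.pow 2)).sub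
        ((h1.pow 2).mul (h2.pow 2))).sub ((h1.pow 4).const_mul (1 / 2))).add (h1.pow 2))
    have hff := hfeq x hx
    have hqq := hqeq x hx
    convert hD using 1
    have hκ2 : κ ^ 2 ≠ 0 := pow_ne_zero _ hκ.ne'
    have hf'' : deriv (deriv f) x = κ ^ 2 * (f x * ((f x) ^ 2 + (q x) ^ 2 - 1)) := by
      field_simp at hff; linarith
    rw [hf'', hqq]
    field_simp
    ring
  have hdiff : DifferentiableOn ℝ H (Set.Ioo b c) := fun x hx =>
    ((key x hx).differentiableAt).differentiableWithinAt
  intro x hx y hy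
  exact (convex_Ioo b c).is_const_of_fderivWithin_eq_zero hdiff
    (fun z hz => by
      rw [fderivWithin_eq_fderiv ((isOpen_Ioo).uniqueDiffWithinAt hz)
        (key z hz).differentiableAt, (key z hz).hasFDerivAt.fderiv]
      exact ContinuousLinearMap.ext fun t => by simp) hx hy
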